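/- Let M be a matroid on a finite ground set S with rank r ≥ 1, let μ : S → ℝ be nonnegative weights, and let B* be a base of M of minimum cost. Let ε ∈ (0,1) and let B be a base of M with cost(B) > (1+ε)·cost(B*). Then there exist s ∈ B and y ∈ S \ B such that B' = (B \ {s}) ∪ {y} is a base of M with cost(B') ≤ (1 − ε/(2r))·cost(B). -/

import Mathlib

open Set

/-- Cost of a single swap. -/
private lemma aux_cost_swap {α : Type*} (μ : α → ℝ) {S : Set α} (hS : S.Finite)
    {s y : α} (hs : s ∈ S) (hy : y ∉ S) :
    ∑ᶠ x ∈ insert y (S \ {s}), μ x = ∑ᶠ x ∈ S, μ x - μ s + μ y := by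
  have h1 : ∑ᶠ x ∈ insert y (S \ {s}), μ x = μ y + ∑ᶠ x ∈ S \ {s}, μ x :=
    finsum_mem_insert μ (fun h => hy h.1) hS.diff
  have hSeq : S = insert s (S \ {s}) := by
    rw [Set.insert_diff_singleton, Set.insert_eq_self.2 hs]
  have h2 : ∑ᶠ x ∈ S, μ x = μ s + ∑ᶠ x ∈ S \ {s}, μ x := by
    have h3 : ∑ᶠ x ∈ insert s (S \ {s}), μ x = μ s + ∑ᶠ x ∈ S \ {s}, μ x :=
      finsum_mem_insert μ (fun h => h.2 rfl) hS.diff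
    rw [Set.insert_diff_singleton, Set.insert_eq_self.2 hs] at h3
    exact h3
  rw [h1, h2]; ring

/-- A finite set spanning `f` has a subset minimally spanning `f`. -/
private lemma aux_min_spanning {α : Type*} (M : Matroid α) (f : α) :
    ∀ n : ℕ, ∀ B : Set α, B.Finite → B.ncard ≤ n → f ∈ M.closure B →
      ∃ A ⊆ B, f ∈ M.closure A ∧ ∀ e ∈ A, f ∉ M.closure (A \ {e}) := by
  intro n
  induction n with
  | zero =>
    intro B hBfin hcard hf
    have : B = ∅ := by
      rw [← Set.ncard_eq_zero hBfin]; omega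
    exact ⟨B, Subset.rfl, hf, by simp [this]⟩
  | succ n IH =>
    intro B hBfin hcard hf
    by_cases h : ∀ e ∈ B, f ∉ M.closure (B \ {e})
    · exact ⟨B, Subset.rfl, hf, h⟩
    · push_neg at h
      obtain ⟨e, heB, hfe⟩ := h
      have hlt : (B \ {e}).ncard ≤ n := by
        have := Set.ncard_diff_singleton_lt_of_mem heB hBfin
        omega
      obtain ⟨A, hAB, hfA, hmin⟩ := IH (B \ {e}) hBfin.diff hlt hfe
      exact ⟨A, hAB.trans diff_subset, hfA, hmin⟩

/-- Symmetric exchange: two distinct bases admit a pair that can be swapped in both. -/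
private lemma aux_sym_exchange {α : Type*} (M : Matroid α) [M.Finite] {B B' : Set α}
    (hB : M.IsBase B) (hB' : M.IsBase B') (hne : B ≠ B') :
    ∃ e ∈ B \ B', ∃ f ∈ B' \ B,
      M.IsBase (insert f (B \ {e})) ∧ M.IsBase (insert e (B' \ {f})) := by
  have hBfin : B.Finite := M.ground_finite.subset hB.subset_ground
  have hfex : (B' \ B).Nonempty := by
    rw [Set.nonempty_iff_ne_empty]
    intro h
    exact hne ((hB'.eq_of_subset_isBase hB (diff_eq_empty.1 h)).symm)
  obtain ⟨f, hf⟩ := hfex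
  have hfE : f ∈ M.E := hB'.subset_ground hf.1
  have hfB : f ∈ M.closure B := by rw [hB.closure_eq]; exact hfE
  obtain ⟨A, hAB, hfA, hmin⟩ :=
    aux_min_spanning M f B.ncard B hBfin le_rfl hfB
  -- part 1 : every e ∈ A gives a base insert f (B \ {e})
  have claim1 : ∀ e ∈ A, M.IsBase (insert f (B \ {e})) := by
    intro e heA
    have heB : e ∈ B := hAB heA
    have hind : M.Indep (B \ {e}) := hB.indep.subset diff_subset
    have hfnotin : f ∉ B \ {e} := fun h => hf.2 h.1
    have hfi : M.Indep (insert f (B \ {e})) := by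
      rw [hind.insert_indep_iff_of_notMem hfnotin]
      refine ⟨hfE, fun hcl => ?_⟩
      -- closure exchange to derive a contradiction
      have hA' : f ∈ M.closure (insert e (A \ {e})) \ M.closure (A \ {e}) := by
        rw [Set.insert_diff_singleton, Set.insert_eq_self.2 heA]
        exact ⟨hfA, hmin e heA⟩
      have hex := Matroid.closure_exchange hA'
      have hsub : M.closure (insert f (A \ {e})) ⊆ M.closure (insert f (B \ {e})) :=
        M.closure_subset_closure (insert_subset_insert (diff_subset_diff_left hAB))
      have : e ∈ M.closure (insert f (B \ {e})) := hsub hex.1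
      rw [Matroid.closure_insert_eq_of_mem_closure hcl] at this
      exact hB.indep.notMem_closure_sdiff_of_mem heB this
    exact hB.exchange_isBase_of_indep (fun h => hf.2 h) hfi
  -- part 2 : some e ∈ A works for B' as well
  have claim2 : ∃ e ∈ A, e ∉ B' ∧ M.IsBase (insert e (B' \ {f})) := by
    by_contra h
    push_neg at h
    have hsubcl : A ⊆ M.closure (B' \ {f}) := by
      intro e heA
      have heB : e ∈ B := hAB heA
      have heE : e ∈ M.E := hB.subset_ground heB
      by_cases heB' : e ∈ B'
      · exact M.subset_closure (B' \ {f})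
          (diff_subset.trans hB'.subset_ground)
          ⟨heB', fun hef => hf.2 (hef ▸ heB)⟩
      · have hnb := h e heA heB'
        have hind : M.Indep (B' \ {f}) := hB'.indep.subset diff_subset
        have henotin : e ∉ B' \ {f} := fun hc => heB' hc.1
        by_contra hecl
        have : M.Indep (insert e (B' \ {f})) := by
          rw [hind.insert_indep_iff_of_notMem henotin]
          exact ⟨heE, hecl⟩
        exact hnb (hB'.exchange_isBase_of_indep heB' this)
    have : f ∈ M.closure (B' \ {f}) :=
      (M.closure_subset_closure_of_subset_closure hsubcl) hfA
    exact hB'.indep.notMem_closure_sdiff_of_mem hf.1 this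
  obtain ⟨e, heA, heB', hbase2⟩ := claim2
  exact ⟨e, ⟨hAB heA, heB'⟩, f, hf, claim1 e heA, hbase2⟩

/-- Induction: some single swap gains at least the average cost difference. -/
private lemma aux_swap_gain {α : Type*} (M : Matroid α) [M.Finite] (μ : α → ℝ) :
    ∀ n : ℕ, ∀ B B' : Set α, M.IsBase B → M.IsBase B' → (B \ B').ncard = n → 0 < n →
      ∃ s ∈ B \ B', ∃ y ∈ B' \ B, M.IsBase (insert y (B \ {s})) ∧
        ∑ᶠ x ∈ B, μ x - ∑ᶠ x ∈ B', μ x ≤ (n : ℝ) * (μ s - μ y) := by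
  intro n
  induction n with
  | zero => intro B B' _ _ _ h; omega
  | succ n IH =>
    intro B B' hB hB' hcard _
    have hBfin : B.Finite := M.ground_finite.subset hB.subset_ground
    have hB'fin : B'.Finite := M.ground_finite.subset hB'.subset_ground
    have hne : B ≠ B' := by
      rintro rfl; simp at hcard
    obtain ⟨e, he, f, hf, hbaseB, hbaseB'⟩ := aux_sym_exchange M hB hB' hne
    by_cases hcase : ∑ᶠ x ∈ B, μ x - ∑ᶠ x ∈ B', μ x ≤ ((n + 1 : ℕ) : ℝ) * (μ e - μ f)
    · exact ⟨e, he, f, hf, hbaseB, hcase⟩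
    push_neg at hcase
    set B'' := insert e (B' \ {f}) with hB''def
    have heB'' : e ∉ B' := he.2
    have hcostB'' : ∑ᶠ x ∈ B'', μ x = ∑ᶠ x ∈ B', μ x - μ f + μ e :=
      aux_cost_swap μ hB'fin hf.1 he.2
    have hdiff : B \ B'' = (B \ B') \ {e} := by
      rw [hB''def]
      ext x
      simp only [Set.mem_diff, Set.mem_insert_iff, Set.mem_singleton_iff, not_or,
        not_and, not_not]
      constructor
      · rintro ⟨hxB, hxe, hx⟩
        exact ⟨⟨hxB, fun hxB' => hf.2 (hx hxB' ▸ hxB)⟩, hxe⟩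
      · rintro ⟨⟨hxB, hxB'⟩, hxe⟩
        exact ⟨hxB, hxe, fun h => absurd h hxB'⟩
    have hcard'' : (B \ B'').ncard = n := by
      rw [hdiff, Set.ncard_diff_singleton_of_mem he, hcard]
      omega
    have hnpos : 0 < n := by
      rcases Nat.eq_zero_or_pos n with hn0 | hn; swap
      · exact hn
      exfalso
      have hempty : B \ B'' = ∅ := (Set.ncard_eq_zero hBfin.diff).1 (by omega)
      have hBB'' : B = B'' :=
        hB.eq_of_subset_isBase hbaseB' (diff_eq_empty.1 hempty)
      have : ∑ᶠ x ∈ B, μ x = ∑ᶠ x ∈ B', μ x - μ f + μ e := by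
        rw [hBB'']; exact hcostB''
      have h1 : ((n + 1 : ℕ) : ℝ) = 1 := by rw [hn0]; norm_num
      rw [h1, one_mul] at hcase
      linarith
    obtain ⟨s, hs, y, hy, hbase, hgain⟩ := IH B B'' hB hbaseB' hcard'' hnpos
    have hsB' : s ∈ B \ B' := by
      refine ⟨hs.1, fun hsB' => hs.2 ?_⟩
      exact Set.mem_insert_iff.2 (Or.inr ⟨hsB', fun h => hf.2 (h ▸ hs.1)⟩)
    have hyB' : y ∈ B' \ B := by
      refine ⟨?_, hy.2⟩
      rcases Set.mem_insert_iff.1 hy.1 with h | h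
      · exact absurd (h ▸ he.1) hy.2
      · exact h.1
    refine ⟨s, hsB', y, hyB', hbase, ?_⟩
    have hn1 : (1 : ℝ) ≤ (n : ℝ) := by exact_mod_cast hnpos
    push_cast at hcase hgain ⊢
    rw [hcostB''] at hgain
    nlinarith [hgain, hcase, hn1]

/-- Circuit-swap improving move for minimum cost matroid bases: if a base `B` has cost
greater than `(1+ε)` times the minimum base cost, then some single exchange
`B' = (B \ {s}) ∪ {y}` (with `s ∈ B`, `y ∈ S \ B`) is a base with
`cost(B') ≤ (1 − ε/(2r))·cost(B)`, where `r ≥ 1` is the rank of the matroid. -/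
theorem matroid_base_improving_swap
    {α : Type*} (M : Matroid α) [M.Finite]
    (r : ℕ) (hr : 1 ≤ r) (hrank : ∀ B, M.IsBase B → B.ncard = r)
    (μ : α → ℝ) (hμ : ∀ s, 0 ≤ μ s)
    (Bstar : Set α) (hBstar : M.IsBase Bstar)
    (hmin : ∀ B, M.IsBase B → ∑ᶠ s ∈ Bstar, μ s ≤ ∑ᶠ s ∈ B, μ s)
    (ε : ℝ) (hε : ε ∈ Set.Ioo (0 : ℝ) 1)
    (B : Set α) (hB : M.IsBase B)
    (hcost : (1 + ε) * ∑ᶠ s ∈ Bstar, μ s < ∑ᶠ s ∈ B, μ s) :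
    ∃ s ∈ B, ∃ y ∈ M.E \ B, M.IsBase (insert y (B \ {s})) ∧
      ∑ᶠ x ∈ insert y (B \ {s}), μ x ≤ (1 - ε / (2 * r)) * ∑ᶠ s ∈ B, μ s := by
  obtain ⟨hε0, hε1⟩ := hε
  have hBfin : B.Finite := M.ground_finite.subset hB.subset_ground
  have hBstarfin : Bstar.Finite := M.ground_finite.subset hBstar.subset_ground
  set cB := ∑ᶠ x ∈ B, μ x with hcB
  set cS := ∑ᶠ x ∈ Bstar, μ x with hcS
  have hcSnn : 0 ≤ cS := by
    rw [hcS, finsum_mem_eq_finite_toFinset_sum μ hBstarfin]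
    exact Finset.sum_nonneg fun i _ => hμ i
  have hcBnn : 0 ≤ cB := le_trans hcSnn (hmin B hB)
  have hdiffpos : 0 < cB - cS := by nlinarith
  set n := (B \ Bstar).ncard with hn
  have hnpos : 0 < n := by
    rcases Nat.eq_zero_or_pos n with h0 | h
    · exfalso
      have : B = Bstar := by
        have hsub : B ⊆ Bstar := diff_eq_empty.1 ((Set.ncard_eq_zero hBfin.diff).1 h0)
        exact hB.eq_of_subset_isBase hBstar hsub
      have heq : cB = cS := by rw [hcB, hcS, this]
      nlinarith
    · exact h
  have hnr : n ≤ r := by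
    rw [hn, ← hrank B hB]
    exact Set.ncard_le_ncard diff_subset hBfin
  obtain ⟨s, hs, y, hy, hbase, hgain⟩ := aux_swap_gain M μ n B Bstar hB hBstar rfl hnpos
  have hyE : y ∈ M.E \ B := ⟨hBstar.subset_ground hy.1, hy.2⟩
  refine ⟨s, hs.1, y, hyE, hbase, ?_⟩
  have hcost' : ∑ᶠ x ∈ insert y (B \ {s}), μ x = cB - μ s + μ y :=
    aux_cost_swap μ hBfin hs.1 hy.2
  -- key inequalities
  have hsy : 0 < μ s - μ y := by
    by_contra h
    push_neg at h
    have : (n : ℝ) * (μ s - μ y) ≤ 0 := by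
      apply mul_nonpos_of_nonneg_of_nonpos
      · positivity
      · linarith
    linarith
  have hnr' : (n : ℝ) ≤ (r : ℝ) := by exact_mod_cast hnr
  have hr1 : (1 : ℝ) ≤ (r : ℝ) := by exact_mod_cast hr
  have hkey1 : cB - cS ≤ (r : ℝ) * (μ s - μ y) := by
    calc cB - cS ≤ (n : ℝ) * (μ s - μ y) := hgain
      _ ≤ (r : ℝ) * (μ s - μ y) := by nlinarith
  have hkey2 : ε * cB ≤ 2 * (cB - cS) := by nlinarith
  have hfinal : ε / (2 * r) * cB ≤ μ s - μ y := by
    rw [div_mul_eq_mul_div, div_le_iff₀ (by positivity)]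
    nlinarith
  rw [hcost']
  nlinarith [hfinal]
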